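/- Over 𝔽₂, let π : V⊗V → V ⊗ (V/span(v₊)) be the map id ⊗ q, where q : V → V/span(v₊) is the quotient map. Then π ∘ Δ : V → V ⊗ (V/span(v₊)) is a linear isomorphism, and likewise π ∘ Δ¹ is a linear isomorphism (this is the second half of the key Lemma in the proof of invariance of homotopical Khovanov homology under the first Reidemeister move). -/

import Mathlib

open TensorProduct

noncomputable section

/-- The ground field `𝔽₂`. -/
abbrev F2 : Type := ZMod 2

/-- The two-dimensional `𝔽₂`-vector space `V` with basis `v₊, v₋`,
realized as pairs of coordinates in this basis. -/
abbrev V : Type := F2 × F2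

/-- The basis vector `v₊`. -/
def vp : V := (1, 0)

/-- The basis vector `v₋`. -/
def vm : V := (0, 1)

/-- Helper: the bilinear map associated to a pair of bilinear coordinate forms. -/
def bil (f : V → V → V)
    (ha : ∀ x x' y, f (x + x') y = f x y + f x' y)
    (hs : ∀ (c : F2) x y, f (c • x) y = c • f x y)
    (ha' : ∀ x y y', f x (y + y') = f x y + f x y')
    (hs' : ∀ (c : F2) x y, f x (c • y) = c • f x y) :
    V ⊗[F2] V →ₗ[F2] V :=
  TensorProduct.lift (LinearMap.mk₂ F2 f ha hs ha' hs')

/-- The multiplication `m` of the Khovanov complex: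
`m(v₊⊗v₊)=v₊, m(v₊⊗v₋)=v₋, m(v₋⊗v₊)=v₋, m(v₋⊗v₋)=0`. -/
def mKh : V ⊗[F2] V →ₗ[F2] V :=
  bil (fun x y => (x.1 * y.1, x.1 * y.2 + x.2 * y.1))
    (by intros; apply Prod.ext <;> simp <;> ring)
    (by intros; apply Prod.ext <;> simp [smul_eq_mul] <;> ring)
    (by intros; apply Prod.ext <;> simp <;> ring)
    (by intros; apply Prod.ext <;> simp [smul_eq_mul] <;> ring)

/-- The map `m⁰`: `m⁰(v₊⊗v₊)=0, m⁰(v₊⊗v₋)=v₋, m⁰(v₋⊗v₊)=v₋, m⁰(v₋⊗v₋)=0`. -/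
def m0 : V ⊗[F2] V →ₗ[F2] V :=
  bil (fun x y => (0, x.1 * y.2 + x.2 * y.1))
    (by intros; apply Prod.ext <;> simp <;> ring)
    (by intros; apply Prod.ext <;> simp [smul_eq_mul] <;> ring)
    (by intros; apply Prod.ext <;> simp <;> ring)
    (by intros; apply Prod.ext <;> simp [smul_eq_mul] <;> ring)

/-- The map `m¹`: `m¹(v₊⊗v₊)=v₊, m¹(v₊⊗v₋)=0, m¹(v₋⊗v₊)=v₋, m¹(v₋⊗v₋)=0`. -/
def m1 : V ⊗[F2] V →ₗ[F2] V :=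
  bil (fun x y => (x.1 * y.1, x.2 * y.1))
    (by intros; apply Prod.ext <;> simp <;> ring)
    (by intros; apply Prod.ext <;> simp [smul_eq_mul] <;> ring)
    (by intros; apply Prod.ext <;> simp <;> ring)
    (by intros; apply Prod.ext <;> simp [smul_eq_mul] <;> ring)

/-- The map `m²`: `m²(v₊⊗v₊)=v₊, m²(v₊⊗v₋)=v₋, m²(v₋⊗v₊)=0, m²(v₋⊗v₋)=0`. -/
def m2 : V ⊗[F2] V →ₗ[F2] V :=
  bil (fun x y => (x.1 * y.1, x.1 * y.2))
    (by intros; apply Prod.ext <;> simp <;> ring)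
    (by intros; apply Prod.ext <;> simp [smul_eq_mul] <;> ring)
    (by intros; apply Prod.ext <;> simp <;> ring)
    (by intros; apply Prod.ext <;> simp [smul_eq_mul] <;> ring)

/-- Helper: the linear map `V → V ⊗ V` sending `v₊ ↦ a` and `v₋ ↦ b`. -/
def diag (a b : V ⊗[F2] V) : V →ₗ[F2] V ⊗[F2] V :=
  (LinearMap.fst F2 F2 F2).smulRight a + (LinearMap.snd F2 F2 F2).smulRight b

/-- The comultiplication `Δ`: `Δ(v₊)=v₊⊗v₋+v₋⊗v₊, Δ(v₋)=v₋⊗v₋`. -/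
def ΔKh : V →ₗ[F2] V ⊗[F2] V := diag (vp ⊗ₜ vm + vm ⊗ₜ vp) (vm ⊗ₜ vm)

/-- The map `Δ⁰`: `Δ⁰(v₊)=v₊⊗v₋+v₋⊗v₊, Δ⁰(v₋)=0`. -/
def Δ0 : V →ₗ[F2] V ⊗[F2] V := diag (vp ⊗ₜ vm + vm ⊗ₜ vp) 0

/-- The map `Δ¹`: `Δ¹(v₊)=v₊⊗v₋, Δ¹(v₋)=v₋⊗v₋`. -/
def Δ1 : V →ₗ[F2] V ⊗[F2] V := diag (vp ⊗ₜ vm) (vm ⊗ₜ vm)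

/-- The map `Δ²`: `Δ²(v₊)=v₋⊗v₊, Δ²(v₋)=v₋⊗v₋`. -/
def Δ2 : V →ₗ[F2] V ⊗[F2] V := diag (vm ⊗ₜ vp) (vm ⊗ₜ vm)

/-- The associator `(V ⊗ V) ⊗ V ≃ V ⊗ (V ⊗ V)` as a linear map. -/
noncomputable def α : (V ⊗[F2] V) ⊗[F2] V →ₗ[F2] V ⊗[F2] (V ⊗[F2] V) :=
  (TensorProduct.assoc F2 V V V).toLinearMap

/-- The inverse associator as a linear map. -/
noncomputable def αinv : V ⊗[F2] (V ⊗[F2] V) →ₗ[F2] (V ⊗[F2] V) ⊗[F2] V :=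
  (TensorProduct.assoc F2 V V V).symm.toLinearMap

namespace KhAux

/-- The quotient space `Q = V / span(v₊)`. -/
abbrev Q : Type := V ⧸ (Submodule.span F2 {vp})

/-- The class of `v₋` in the quotient. -/
def w : Q := (Submodule.span F2 {vp}).mkQ vm

lemma mkQ_vp : (Submodule.span F2 {vp}).mkQ vp = 0 := by
  simp [Submodule.mkQ_apply, Submodule.Quotient.mk_eq_zero, Submodule.mem_span_singleton_self]

/-- The map `x ↦ x ⊗ w`. -/
def f : V →ₗ[F2] V ⊗[F2] Q := (TensorProduct.mk F2 V Q).flip w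

lemma snd_span : Submodule.span F2 {vp} ≤ LinearMap.ker (LinearMap.snd F2 F2 F2) := by
  rw [Submodule.span_le]
  rintro x rfl
  simp [vp]

lemma mk_vp : (Submodule.Quotient.mk ((1, 0) : V) : Q) = 0 := by
  exact mkQ_vp

/-- The inverse: `x ⊗ [y] ↦ y₂ • x`. -/
def g : V ⊗[F2] Q →ₗ[F2] V :=
  (TensorProduct.rid F2 V).toLinearMap ∘ₗ
    LinearMap.lTensor V (Submodule.liftQ _ (LinearMap.snd F2 F2 F2) snd_span)

lemma liftQ_w :
    Submodule.liftQ _ (LinearMap.snd F2 F2 F2) snd_span w = 1 := rfl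

lemma g_f (x : V) : g (f x) = x := by
  simp [f, g, w, vm, TensorProduct.rid_tmul]

lemma f_g (t : V ⊗[F2] Q) : f (g t) = t := by
  induction t using TensorProduct.induction_on with
  | zero => simp
  | tmul x z =>
    obtain ⟨y, rfl⟩ := Submodule.mkQ_surjective _ z
    have h : (Submodule.span F2 {vp}).mkQ y = y.2 • w := by
      rw [w, ← map_smul, Submodule.mkQ_apply, Submodule.mkQ_apply,
        Submodule.Quotient.eq]
      refine Submodule.mem_span_singleton.mpr ⟨y.1, ?_⟩
      apply Prod.ext <;> simp [vp, vm]
    simp [f, g, TensorProduct.rid_tmul, h, TensorProduct.tmul_smul,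
      TensorProduct.smul_tmul, liftQ_w]
  | add a b ha hb => simp [ha, hb]

lemma f_bij : Function.Bijective ⇑f :=
  Function.bijective_iff_has_inverse.mpr ⟨⇑g, g_f, f_g⟩

lemma decomp (x : V) : x = x.1 • vp + x.2 • vm := by
  apply Prod.ext <;> simp [vp, vm]

lemma tmul_decomp (x : V) (z : Q) :
    x.1 • (((1, 0) : V) ⊗ₜ[F2] z) + x.2 • (((0, 1) : V) ⊗ₜ[F2] z)
      = x ⊗ₜ[F2] z := by
  conv_rhs => rw [decomp x]
  rw [TensorProduct.add_tmul, ← TensorProduct.smul_tmul',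
    ← TensorProduct.smul_tmul']
  rfl

lemma comp_Delta_eq :
    LinearMap.lTensor V (Submodule.span F2 {vp}).mkQ ∘ₗ ΔKh = f := by
  apply LinearMap.ext; intro x
  conv_rhs => rw [f, decomp x]
  simp only [LinearMap.comp_apply, ΔKh, diag, LinearMap.add_apply, LinearMap.smulRight_apply,
    LinearMap.fst_apply, LinearMap.snd_apply, map_add, map_smul, LinearMap.lTensor_tmul,
    mkQ_vp, TensorProduct.tmul_zero, smul_zero, add_zero, LinearMap.flip_apply,
    TensorProduct.mk_apply, TensorProduct.add_tmul, TensorProduct.smul_tmul', w]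

lemma comp_Delta1_eq :
    LinearMap.lTensor V (Submodule.span F2 {vp}).mkQ ∘ₗ Δ1 = f := by
  apply LinearMap.ext; intro x
  conv_rhs => rw [f, decomp x]
  simp [Δ1, diag, w, mkQ_vp, mk_vp, TensorProduct.add_tmul,
    TensorProduct.smul_tmul, vp, vm]
  exact tmul_decomp x _

end KhAux

/-- with `π = id ⊗ q` where `q : V → V/span(v₊)` is the quotient map,
both `π ∘ Δ` and `π ∘ Δ¹` are linear isomorphisms `V → V ⊗ (V/span(v₊))`. -/
theorem pi_comp_Delta_bijective :
    Function.Bijective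
      ⇑(LinearMap.lTensor V (Submodule.span F2 {vp}).mkQ ∘ₗ ΔKh) ∧
    Function.Bijective
      ⇑(LinearMap.lTensor V (Submodule.span F2 {vp}).mkQ ∘ₗ Δ1) := by
  exact ⟨KhAux.comp_Delta_eq ▸ KhAux.f_bij, KhAux.comp_Delta1_eq ▸ KhAux.f_bij⟩
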